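/- (Forward Convergence on cut-rectangles, base setup) Consider the difference-message dynamics on the (N+2)×(N+2) grid. Suppose for all b with 1≤b≤β and all n≥0, m^n_{E(0,b)} = 1, and for all a with 1≤a≤α and all n≥0, m^n_{N(a,0)} = 1 (messages entering the rectangle R = {1,...,α}×{1,...,β} from the west and south are identically +1). Then for every D≥1, every (a,b)∈R with (a-1)+(b-1) ≤ D-1, and every n ≥ D, the messages m^n_{E(a,b)} and m^n_{N(a,b)} equal +1, where E(a,b) denotes the directed edge (a,b)→(a+1,b) and N(a,b) denotes (a,b)→(a,b+1). -/
import Mathlib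


/-- Forward convergence on cut-rectangles: if the difference messages entering the
rectangle `{1,…,α} × {1,…,β}` from the west and south are identically `+1`, then for
every `D ≥ 1`, every site `(a,b)` of the rectangle at L¹-distance at most `D-1` from
`(1,1)` sends east and north messages equal to `+1` at all times `n ≥ D`. -/
theorem forward_convergence_cut_rectangle
    (N : ℕ) (α β : ℤ) (hα : 1 ≤ α) (hαN : α ≤ N) (hβ : 1 ≤ β) (hβN : β ≤ N)
    (m : ℕ → (ℤ × ℤ) → (ℤ × ℤ) → ℤ)
    -- all messages lie in {-1, 0, 1}
    (hrange : ∀ n p q, m n p q = -1 ∨ m n p q = 0 ∨ m n p q = 1)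
    -- east-message update for interior senders
    (hupE : ∀ a b : ℤ, 1 ≤ a → a ≤ N → 1 ≤ b → b ≤ N → ∀ n : ℕ, 0 < n →
      m n (a, b) (a + 1, b) =
        Int.sign (m (n-1) (a - 1, b) (a, b) + m (n-1) (a, b - 1) (a, b) +
          m (n-1) (a, b + 1) (a, b)))
    -- north-message update for interior senders
    (hupN : ∀ a b : ℤ, 1 ≤ a → a ≤ N → 1 ≤ b → b ≤ N → ∀ n : ℕ, 0 < n →
      m n (a, b) (a, b + 1) =
        Int.sign (m (n-1) (a - 1, b) (a, b) + m (n-1) (a, b - 1) (a, b) +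
          m (n-1) (a + 1, b) (a, b)))
    -- messages entering from the west are +1
    (hW : ∀ b : ℤ, 1 ≤ b → b ≤ β → ∀ n : ℕ, m n (0, b) (1, b) = 1)
    -- messages entering from the south are +1
    (hS : ∀ a : ℤ, 1 ≤ a → a ≤ α → ∀ n : ℕ, m n (a, 0) (a, 1) = 1) :
    ∀ D : ℕ, 1 ≤ D → ∀ a b : ℤ, 1 ≤ a → a ≤ α → 1 ≤ b → b ≤ β →
      (a - 1) + (b - 1) ≤ (D : ℤ) - 1 → ∀ n : ℕ, D ≤ n →
        m n (a, b) (a + 1, b) = 1 ∧ m n (a, b) (a, b + 1) = 1 := by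
  have key : ∀ x : ℤ, x = -1 ∨ x = 0 ∨ x = 1 → Int.sign (1 + 1 + x) = 1 := by
    rintro x (rfl | rfl | rfl) <;> decide
  suffices h : ∀ D : ℕ, ∀ a b : ℤ, 1 ≤ a → a ≤ α → 1 ≤ b → b ≤ β →
      a - 1 + (b - 1) ≤ (D : ℤ) → ∀ n : ℕ, D + 1 ≤ n →
      m n (a, b) (a + 1, b) = 1 ∧ m n (a, b) (a, b + 1) = 1 by
    intro D hD a b ha haα hb hbβ hd n hn
    exact h (D - 1) a b ha haα hb hbβ (by omega) n (by omega)
  intro D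
  induction D with
  | zero =>
    intro a b ha haα hb hbβ hd n hn
    have ha1 : a = 1 := by omega
    have hb1 : b = 1 := by omega
    subst ha1; subst hb1
    have hn0 : 0 < n := by omega
    have hwest : m (n-1) (1 - 1, 1) (1, 1) = 1 := by
      simpa using hW 1 le_rfl hβ (n-1)
    have hsouth : m (n-1) (1, 1 - 1) (1, 1) = 1 := by
      simpa using hS 1 le_rfl hα (n-1)
    constructor
    · rw [hupE 1 1 le_rfl (le_trans hα hαN) le_rfl (le_trans hβ hβN) n hn0,
        hwest, hsouth]
      exact key _ (hrange _ _ _)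
    · rw [hupN 1 1 le_rfl (le_trans hα hαN) le_rfl (le_trans hβ hβN) n hn0,
        hwest, hsouth]
      exact key _ (hrange _ _ _)
  | succ D ih =>
    intro a b ha haα hb hbβ hd n hn
    have hn0 : 0 < n := by omega
    have hwest : m (n-1) (a - 1, b) (a, b) = 1 := by
      rcases eq_or_lt_of_le ha with h1 | h1
      · rw [← h1]; simpa using hW b hb hbβ (n-1)
      · have := (ih (a - 1) b (by omega) (by omega) hb hbβ (by omega)
          (n-1) (by omega)).1
        have e : a - 1 + 1 = a := by ring
        rwa [e] at this
    have hsouth : m (n-1) (a, b - 1) (a, b) = 1 := by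
      rcases eq_or_lt_of_le hb with h1 | h1
      · rw [← h1]; simpa using hS a ha haα (n-1)
      · have := (ih a (b - 1) ha haα (by omega) (by omega) (by omega)
          (n-1) (by omega)).2
        have e : b - 1 + 1 = b := by ring
        rwa [e] at this
    constructor
    · rw [hupE a b ha (le_trans haα hαN) hb (le_trans hbβ hβN) n hn0,
        hwest, hsouth]
      exact key _ (hrange _ _ _)
    · rw [hupN a b ha (le_trans haα hαN) hb (le_trans hbβ hβN) n hn0,
        hwest, hsouth]
      exact key _ (hrange _ _ _)
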